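/- Let C = (c_{ij}) be an (n-1)×n matrix with entries in ℝ ∪ {−∞}, and for k ∈ [n] let per C_{|k)} = max over bijections σ : [n-1] → [n]∖{k} of Σ_{i∈[n-1]} c_{iσ(i)}. Consider the primal transportation problem: maximize Σ_{ij} c_{ij}·y_{ij} over nonnegative real (n-1)×n matrices y with every row sum equal to n, every column sum equal to n-1, and y_{ij} = 0 whenever c_{ij} = −∞; and its dual: minimize n·Σ_{i∈[n-1]} u_i + (n-1)·Σ_{j∈[n]} v_j over u ∈ ℝ^{n-1}, v ∈ ℝ^n with c_{ij} ≤ u_i + v_j whenever c_{ij} is finite. Then: (i) the primal problem is feasible if and only if per C_{|k)} is finite for every k ∈ [n]; (ii) when this is the case, the dual problem has an optimal solution, any two optimal dual solutions (u,v) and (u',v') satisfy u'_i = u_i + t and v'_j = v_j − t for all i, j, for some constant t ∈ ℝ, and every optimal dual solution (u,v) satisfies per C_{|k)} = Σ_{i∈[n-1]} u_i + Σ_{j∈[n], j≠k} v_j for every k ∈ [n]. -/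

import Mathlib

open Finset

/-- The tropical Cramer permanent `per C_{|k)}` of an `m × (m+1)` matrix over
`ℝ ∪ {-∞}`: the value of the optimal assignment problem for the matrix obtained by
deleting column `k`. -/
noncomputable def cramerPer {m : ℕ} (C : Matrix (Fin m) (Fin (m + 1)) (WithBot ℝ))
    (k : Fin (m + 1)) : WithBot ℝ :=
  Finset.univ.sup fun σ : Equiv.Perm (Fin m) => ∑ i, C i (k.succAbove (σ i))

/-- Feasibility for the primal transportation problem associated with `C`. -/
def primalFeasible {m : ℕ} (C : Matrix (Fin m) (Fin (m + 1)) (WithBot ℝ))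
    (y : Matrix (Fin m) (Fin (m + 1)) ℝ) : Prop :=
  (∀ i j, 0 ≤ y i j) ∧ (∀ i, ∑ j, y i j = (m + 1 : ℝ)) ∧
  (∀ j, ∑ i, y i j = (m : ℝ)) ∧ ∀ i j, C i j = ⊥ → y i j = 0

/-- Feasibility for the dual transportation problem: `c_{ij} ≤ u_i + v_j` whenever
`c_{ij}` is finite. -/
def dualFeasible {m : ℕ} (C : Matrix (Fin m) (Fin (m + 1)) (WithBot ℝ))
    (u : Fin m → ℝ) (v : Fin (m + 1) → ℝ) : Prop :=
  ∀ i j, C i j ≤ ((u i + v j : ℝ) : WithBot ℝ)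

/-- The dual objective function `n·Σu + (n-1)·Σv` (here `n = m+1`). -/
def dualObj {m : ℕ} (u : Fin m → ℝ) (v : Fin (m + 1) → ℝ) : ℝ :=
  (m + 1 : ℝ) * ∑ i, u i + (m : ℝ) * ∑ j, v j

/-- Optimality for the dual transportation problem. -/
def dualOptimal {m : ℕ} (C : Matrix (Fin m) (Fin (m + 1)) (WithBot ℝ))
    (u : Fin m → ℝ) (v : Fin (m + 1) → ℝ) : Prop :=
  dualFeasible C u v ∧
  ∀ u' v', dualFeasible C u' v' → dualObj u v ≤ dualObj u' v'


lemma wb_sum_coe {α : Type*} (s : Finset α) (f : α → ℝ) :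
    ((∑ i ∈ s, f i : ℝ) : WithBot ℝ) = ∑ i ∈ s, (f i : WithBot ℝ) := by
  classical
  induction s using Finset.cons_induction with
  | empty => simp
  | cons a s ha ih => simp [Finset.sum_cons, ih, WithBot.coe_add]

lemma wb_sum_coe_of_ne_bot {α : Type*} (s : Finset α) (f : α → WithBot ℝ)
    (h : ∀ i ∈ s, f i ≠ ⊥) :
    ∑ i ∈ s, f i = ((∑ i ∈ s, WithBot.unbotD 0 (f i) : ℝ) : WithBot ℝ) := by
  rw [wb_sum_coe]
  refine Finset.sum_congr rfl fun i hi => ?_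
  obtain ⟨x, hx⟩ := WithBot.ne_bot_iff_exists.mp (h i hi)
  rw [← hx, WithBot.unbotD_coe]

lemma wb_sum_eq_bot {α : Type*} (s : Finset α) (f : α → WithBot ℝ) {i : α}
    (hi : i ∈ s) (h : f i = ⊥) : ∑ j ∈ s, f j = ⊥ := by
  classical
  rw [← Finset.add_sum_erase _ _ hi, h]
  exact WithBot.bot_add _

lemma wb_sum_ne_bot {α : Type*} {s : Finset α} {f : α → WithBot ℝ}
    (h : ∀ i ∈ s, f i ≠ ⊥) : ∑ i ∈ s, f i ≠ ⊥ := by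
  rw [wb_sum_coe_of_ne_bot s f h]; exact WithBot.coe_ne_bot

lemma perm_of_avoid {m : ℕ} {g : Fin m → Fin (m + 1)} {k : Fin (m + 1)}
    (hinj : Function.Injective g) (hne : ∀ i, g i ≠ k) :
    ∃ π : Equiv.Perm (Fin m), ∀ i, k.succAbove (π i) = g i := by
  have h : ∀ i, ∃ l, k.succAbove l = g i := fun i => Fin.exists_succAbove_eq (hne i)
  choose q hq using h
  have hqinj : Function.Injective q := fun a b hab => by
    apply hinj; rw [← hq a, ← hq b, hab]
  have hbij : Function.Bijective q := Finite.injective_iff_bijective.mp hqinj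
  exact ⟨Equiv.ofBijective q hbij, fun i => hq i⟩

lemma decomp (r : ℕ) {m : ℕ} (d : Fin m → Fin (m + 1) → ℕ)
    (hrow : ∀ i, ∑ j, d i j = r) (hcol : ∀ j, ∑ i, d i j ≤ r) :
    ∃ (g : Fin r → Fin m → Fin (m + 1)) (ms : Fin r → Fin (m + 1)),
      (∀ t, Function.Injective (g t)) ∧ (∀ t i, g t i ≠ ms t) ∧
      (∀ i j, d i j = ∑ t, if g t i = j then 1 else 0) ∧
      (∀ j, (∑ i, d i j) + (∑ t, if ms t = j then 1 else 0) = r) := by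
  classical
  induction r generalizing d with
  | zero =>
    refine ⟨Fin.elim0, Fin.elim0, fun t => t.elim0, fun t => t.elim0, ?_, ?_⟩
    · intro i j
      have := Finset.sum_eq_zero_iff.mp (hrow i) j (mem_univ j)
      simpa using this
    · intro j
      have : ∀ i, d i j = 0 := fun i => Finset.sum_eq_zero_iff.mp (hrow i) j (mem_univ j)
      simp [this]
  | succ r ih =>
    set T : Option (Fin m) → Finset (Fin (m + 1)) := fun o =>
      Option.rec (univ.filter fun j => ∑ i, d i j ≤ r)
        (fun i => univ.filter fun j => 0 < d i j) o with hT
    -- Hall condition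
    have hall : ∀ S : Finset (Option (Fin m)), S.card ≤ (S.biUnion T).card := by
      intro S
      set S' : Finset (Fin m) := S.eraseNone with hS'
      have hmemS' : ∀ i, i ∈ S' ↔ some i ∈ S := fun i => Finset.mem_eraseNone
      set N' : Finset (Fin (m + 1)) := S'.biUnion (fun i => T (some i)) with hN'
      have hzero : ∀ j, j ∉ N' → ∀ i ∈ S', d i j = 0 := by
        intro j hj i hi
        by_contra h
        exact hj (Finset.mem_biUnion.mpr ⟨i, hi, by simp [hT, Nat.pos_of_ne_zero h]⟩)
      have claim1 : (r + 1) * S'.card = ∑ j ∈ N', ∑ i ∈ S', d i j := by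
        have e1 : ∑ i ∈ S', ∑ j, d i j = (r + 1) * S'.card := by
          rw [Finset.sum_congr rfl fun i _ => hrow i]
          simp [mul_comm]
        rw [← e1, Finset.sum_comm]
        rw [← Finset.sum_subset (Finset.subset_univ N')]
        intro j _ hj
        exact Finset.sum_eq_zero (hzero j hj)
      have hsub : N' ⊆ S.biUnion T := by
        intro j hj
        obtain ⟨i, hi, hji⟩ := Finset.mem_biUnion.mp hj
        exact Finset.mem_biUnion.mpr ⟨some i, (hmemS' i).mp hi, hji⟩
      by_cases hn : none ∈ S
      · -- case with the dummy row
        have hcardS : S.card ≤ S'.card + 1 := by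
          have : S ⊆ Finset.insertNone S' := by
            intro x hx
            cases x with
            | none => simp
            | some a => simp [Finset.mem_insertNone, (hmemS' a).mpr hx]
          simpa [Finset.card_insertNone] using Finset.card_le_card this
        set NT : Finset (Fin (m + 1)) := T none with hNT
        have hNTsub : NT ⊆ S.biUnion T := fun j hj =>
          Finset.mem_biUnion.mpr ⟨none, hn, hj⟩
        -- NT nonempty
        have hNTne : 1 ≤ NT.card := by
          rcases Finset.eq_empty_or_nonempty NT with he | hne
          · exfalso
            have hall_tight : ∀ j, ∑ i, d i j = r + 1 := by
              intro j
              have h1 : ¬ (∑ i, d i j ≤ r) := by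
                intro hle
                have : j ∈ NT := by simp [hNT, hT, hle]
                simp [he] at this
              have h2 := hcol j
              omega
              
            have e2 : ∑ j : Fin (m + 1), ∑ i, d i j = (m + 1) * (r + 1) := by
              rw [Finset.sum_congr rfl fun j _ => hall_tight j]; simp [mul_comm]
            have e3 : ∑ j : Fin (m + 1), ∑ i, d i j = m * (r + 1) := by
              rw [Finset.sum_comm, Finset.sum_congr rfl fun i _ => hrow i]
              simp [mul_comm]
            nlinarith
          · exact Finset.card_pos.mpr hne
        have hbound : (r + 1) * S'.card ≤ (r + 1) * (N' \ NT).card + r * NT.card := by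
          rw [claim1]
          have : ∑ j ∈ N', ∑ i ∈ S', d i j =
              ∑ j ∈ N' \ NT, ∑ i ∈ S', d i j + ∑ j ∈ N' ∩ NT, ∑ i ∈ S', d i j := by
            rw [← Finset.sum_union (Finset.disjoint_sdiff_inter N' NT)]
            congr 1
            exact (Finset.sdiff_union_inter N' NT).symm
          rw [this]
          have b1 : ∑ j ∈ N' \ NT, ∑ i ∈ S', d i j ≤ (r + 1) * (N' \ NT).card := by
            have := Finset.sum_le_card_nsmul (N' \ NT) (fun j => ∑ i ∈ S', d i j) (r + 1)
              (fun j _ => le_trans (Finset.sum_le_sum_of_subset (Finset.subset_univ S')) (hcol j))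
            simpa [mul_comm] using this
          have b2 : ∑ j ∈ N' ∩ NT, ∑ i ∈ S', d i j ≤ r * NT.card := by
            have hstep : ∑ j ∈ N' ∩ NT, ∑ i ∈ S', d i j ≤ r * (N' ∩ NT).card := by
              have := Finset.sum_le_card_nsmul (N' ∩ NT) (fun j => ∑ i ∈ S', d i j) r
                (fun j hj => by
                  have hjNT : j ∈ NT := (Finset.mem_inter.mp hj).2
                  simp only [hNT, hT, Finset.mem_filter] at hjNT
                  exact le_trans (Finset.sum_le_sum_of_subset (Finset.subset_univ S')) hjNT.2)
              simpa [mul_comm] using this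
            exact le_trans hstep (Nat.mul_le_mul_left r (Finset.card_le_card Finset.inter_subset_right))
          omega
        have hunion : (N' \ NT).card + NT.card ≤ (S.biUnion T).card := by
          rw [Finset.card_sdiff_add_card]
          exact Finset.card_le_card (Finset.union_subset hsub hNTsub)
        -- conclude
        by_contra hcon
        push_neg at hcon
        have h1 : (S.biUnion T).card + 1 ≤ S.card := hcon
        have h2 : S'.card + 1 + 1 ≥ S.card + 1 := by omega
        -- so (N'\NT).card + NT.card + 1 ≤ S'.card + 1, i.e. a + B ≤ S'.card
        have h3 : (N' \ NT).card + NT.card ≤ S'.card := by omega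
        have h4 : (r + 1) * ((N' \ NT).card + NT.card) ≤ (r + 1) * S'.card :=
          Nat.mul_le_mul_left _ h3
        have h5 : (r + 1) * NT.card ≤ r * NT.card := by
          have := le_trans h4 hbound
          rw [Nat.mul_add] at this
          omega
        have : NT.card = 0 := by
          rcases Nat.eq_zero_or_pos NT.card with h | h
          · exact h
          · exfalso; nlinarith
        omega
      · -- no dummy row
        have hSeq : S = S'.image some := by
          ext x
          cases x with
          | none => simp [hn, hS']
          | some a => simp [hS', Finset.mem_eraseNone]
        have hcardS : S.card = S'.card := by
          rw [hSeq, Finset.card_image_of_injective _ (Option.some_injective _)]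
        have hle : (r + 1) * S'.card ≤ (r + 1) * N'.card := by
          rw [claim1]
          have := Finset.sum_le_card_nsmul N' (fun j => ∑ i ∈ S', d i j) (r + 1)
            (fun j _ => le_trans (Finset.sum_le_sum_of_subset (Finset.subset_univ S')) (hcol j))
          simpa [mul_comm] using this
        have : S'.card ≤ N'.card := Nat.le_of_mul_le_mul_left hle (Nat.succ_pos r)
        calc S.card = S'.card := hcardS
          _ ≤ N'.card := this
          _ ≤ (S.biUnion T).card := Finset.card_le_card hsub
    obtain ⟨G, hGinj, hGmem⟩ := (Finset.all_card_le_biUnion_card_iff_exists_injective T).mp hall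
    set g0 : Fin m → Fin (m + 1) := fun i => G (some i) with hg0
    have hg0inj : Function.Injective g0 := fun a b hab => by
      have := hGinj hab; simpa using this
    set k0 : Fin (m + 1) := G none with hk0
    have hg0ne : ∀ i, g0 i ≠ k0 := fun i h => by
      have := hGinj h
      simp at this
    have hg0pos : ∀ i, 0 < d i (g0 i) := fun i => by
      have := hGmem (some i); simp only [hT, Finset.mem_filter] at this; exact this.2
    have hk0col : ∑ i, d i k0 ≤ r := by
      have := hGmem none; simp only [hT, Finset.mem_filter] at this; exact this.2
    have hGsurj : Function.Surjective G :=
      ((Fintype.bijective_iff_injective_and_card G).mpr ⟨hGinj, by simp⟩).2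
    set d' : Fin m → Fin (m + 1) → ℕ := fun i j => d i j - (if g0 i = j then 1 else 0) with hd'
    have hite_le : ∀ i j, (if g0 i = j then 1 else 0) ≤ d i j := by
      intro i j
      split
      · next h => rw [← h]; exact hg0pos i
      · exact Nat.zero_le _
    have hsum_ite_row : ∀ i, ∑ j, (if g0 i = j then 1 else 0) = 1 := by
      intro i
      rw [Finset.sum_ite_eq univ (g0 i) (fun _ => 1)]
      simp
    have hrow' : ∀ i, ∑ j, d' i j = r := by
      intro i
      rw [hd']
      rw [Finset.sum_tsub_distrib univ (fun j _ => hite_le i j), hsum_ite_row i, hrow i]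
      omega
    have hcolsplit : ∀ j, ∑ i, d i j = ∑ i, d' i j + ∑ i, (if g0 i = j then 1 else 0) := by
      intro j
      rw [← Finset.sum_add_distrib]
      exact Finset.sum_congr rfl fun i _ => (Nat.sub_add_cancel (hite_le i j)).symm
    have hcount : ∀ j, ∑ i, (if g0 i = j then 1 else 0) + (if k0 = j then 1 else 0) = 1 := by
      intro j
      by_cases hj : j = k0
      · have h0 : ∑ i, (if g0 i = j then 1 else 0) = 0 :=
          Finset.sum_eq_zero fun i _ => by simp [hj, hg0ne i]
        have h1 : (if k0 = j then 1 else 0) = 1 := by simp [hj]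
        omega
      · obtain ⟨o, ho⟩ := hGsurj j
        have hone : o ≠ none := by
          intro h; rw [h] at ho; exact hj (ho.symm)
        obtain ⟨i0, rfl⟩ := Option.ne_none_iff_exists'.mp hone
        have hi0 : g0 i0 = j := ho
        have : ∑ i, (if g0 i = j then 1 else 0) = ∑ i, (if i = i0 then 1 else 0) := by
          refine Finset.sum_congr rfl fun i _ => ?_
          refine if_congr ⟨fun h => hg0inj (h.trans hi0.symm), fun h => h ▸ hi0⟩ rfl rfl
        rw [this, Finset.sum_ite_eq' univ i0 (fun _ => 1)]
        simp [Ne.symm hj]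
    have hcol' : ∀ j, ∑ i, d' i j ≤ r := by
      intro j
      by_cases hj : j = k0
      · rw [hj]
        exact le_trans (Finset.sum_le_sum fun i _ => Nat.sub_le _ _) hk0col
      · have h1 := hcolsplit j
        have h2 := hcol j
        have h3 := hcount j
        have h4 : (if k0 = j then 1 else 0) = 0 := by simp [Ne.symm hj]
        omega
    obtain ⟨g', ms', hinj', hne', hdec', hcols'⟩ := ih d' hrow' hcol'
    refine ⟨Fin.cons g0 g', Fin.cons k0 ms', ?_, ?_, ?_, ?_⟩
    · intro t
      induction t using Fin.cases with
      | zero => simpa [Fin.cons_zero] using hg0inj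
      | succ t => simpa [Fin.cons_succ] using hinj' t
    · intro t i
      induction t using Fin.cases with
      | zero => simpa [Fin.cons_zero] using hg0ne i
      | succ t => simpa [Fin.cons_succ] using hne' t i
    · intro i j
      rw [Fin.sum_univ_succ]
      simp only [Fin.cons_zero, Fin.cons_succ]
      rw [← hdec' i j]
      have := hite_le i j
      simp only [hd']
      omega
    · intro j
      rw [Fin.sum_univ_succ]
      simp only [Fin.cons_zero, Fin.cons_succ]
      have h1 := hcols' j
      have h2 := hcolsplit j
      have h3 := hcount j
      omega

lemma cramer_exists_max {m : ℕ} (C : Matrix (Fin m) (Fin (m + 1)) (WithBot ℝ)) (k : Fin (m + 1))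
    (h : cramerPer C k ≠ ⊥) :
    ∃ (σ : Equiv.Perm (Fin m)) (w : Fin m → ℝ),
      (∀ i, C i (k.succAbove (σ i)) = (w i : WithBot ℝ)) ∧
      ((∑ i, w i : ℝ) : WithBot ℝ) = cramerPer C k := by
  obtain ⟨σ, -, hσ⟩ := Finset.exists_mem_eq_sup univ univ_nonempty
    (fun σ : Equiv.Perm (Fin m) => ∑ i, C i (k.succAbove (σ i)))
  have hσ' : cramerPer C k = ∑ i, C i (k.succAbove (σ i)) := hσ
  have hne : ∀ i ∈ (univ : Finset (Fin m)), C i (k.succAbove (σ i)) ≠ ⊥ := by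
    intro i _ hbot
    exact h (hσ'.trans (wb_sum_eq_bot _ _ (mem_univ i) hbot))
  refine ⟨σ, fun i => WithBot.unbotD 0 (C i (k.succAbove (σ i))), fun i => ?_, ?_⟩
  · obtain ⟨x, hx⟩ := WithBot.ne_bot_iff_exists.mp (hne i (mem_univ i))
    rw [← hx]; simp [← hx]
  · rw [hσ', wb_sum_coe_of_ne_bot _ _ hne]

lemma sum_succAbove_perm {m : ℕ} (v : Fin (m + 1) → ℝ) (k : Fin (m + 1))
    (σ : Equiv.Perm (Fin m)) :
    ∑ i, v (k.succAbove (σ i)) = ∑ j, v j - v k := by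
  rw [Equiv.sum_comp σ (fun i => v (k.succAbove i))]
  have := Fin.sum_univ_succAbove v k
  linarith

lemma weak_dual {m : ℕ} {C : Matrix (Fin m) (Fin (m + 1)) (WithBot ℝ)}
    {u : Fin m → ℝ} {v : Fin (m + 1) → ℝ} (h : dualFeasible C u v) (k : Fin (m + 1)) :
    cramerPer C k ≤ ((∑ i, u i + (∑ j, v j - v k) : ℝ) : WithBot ℝ) := by
  refine Finset.sup_le fun σ _ => ?_
  calc ∑ i, C i (k.succAbove (σ i))
      ≤ ∑ i, ((u i + v (k.succAbove (σ i)) : ℝ) : WithBot ℝ) :=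
        Finset.sum_le_sum fun i _ => h i _
    _ = ((∑ i, (u i + v (k.succAbove (σ i))) : ℝ) : WithBot ℝ) := (wb_sum_coe _ _).symm
    _ = _ := by
        rw [Finset.sum_add_distrib, sum_succAbove_perm v k σ]

lemma dualObj_eq_sum {m : ℕ} (u : Fin m → ℝ) (v : Fin (m + 1) → ℝ) :
    dualObj u v = ∑ k : Fin (m + 1), (∑ i, u i + (∑ j, v j - v k)) := by
  rw [dualObj]
  rw [Finset.sum_add_distrib, Finset.sum_sub_distrib, Finset.sum_const, Finset.sum_const]
  simp [card_univ]
  push_cast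
  ring

lemma key_ineq {m : ℕ} (C : Matrix (Fin m) (Fin (m + 1)) (WithBot ℝ))
    (p : Fin (m + 1) → ℝ) (hp : ∀ k, cramerPer C k = ((p k : ℝ) : WithBot ℝ))
    (f : Fin m → Fin (m + 1)) :
    ∑ i, (C i (f i) + ((p (f i) : ℝ) : WithBot ℝ)) ≤ ((∑ k, p k : ℝ) : WithBot ℝ) := by
  classical
  by_cases hbot : ∃ i, C i (f i) = ⊥
  · obtain ⟨i, hi⟩ := hbot
    have hb : C i (f i) + ((p (f i) : ℝ) : WithBot ℝ) = ⊥ := by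
      rw [hi]; exact WithBot.bot_add _
    rw [wb_sum_eq_bot univ _ (mem_univ i) hb]
    exact bot_le
  push_neg at hbot
  have hmax : ∀ k, ∃ (σ : Equiv.Perm (Fin m)) (w : Fin m → ℝ),
      (∀ i, C i (k.succAbove (σ i)) = (w i : WithBot ℝ)) ∧ ∑ i, w i = p k := by
    intro k
    obtain ⟨σ, w, hw1, hw2⟩ := cramer_exists_max C k (by rw [hp k]; exact WithBot.coe_ne_bot)
    refine ⟨σ, w, hw1, ?_⟩
    have := hw2.trans (hp k)
    exact_mod_cast this
  choose σ w hw hwsum using hmax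
  set d : Fin m → Fin (m + 1) → ℕ := fun i j =>
    (if f i = j then 1 else 0) +
      ∑ i', (if (f i').succAbove (σ (f i') i) = j then 1 else 0) with hd
  have hrow : ∀ i, ∑ j, d i j = m + 1 := by
    intro i
    rw [hd]
    rw [Finset.sum_add_distrib, Finset.sum_ite_eq univ (f i) fun _ => 1, Finset.sum_comm]
    have h1 : ∀ i' : Fin m, ∑ j, (if (f i').succAbove (σ (f i') i) = j then 1 else 0) = 1 := by
      intro i'
      rw [Finset.sum_ite_eq univ _ fun _ => 1]; simp
    rw [Finset.sum_congr rfl fun i' _ => h1 i']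
    simp
    omega
  have hcolcount : ∀ (k : Fin (m + 1)) (j : Fin (m + 1)),
      (∑ i, if k.succAbove (σ k i) = j then 1 else 0) + (if k = j then 1 else 0) = 1 := by
    intro k j
    have h1 : (∑ i, if k.succAbove (σ k i) = j then 1 else 0)
        = ∑ i, (if k.succAbove i = j then 1 else 0) :=
      Equiv.sum_comp (σ k) (fun i => if k.succAbove i = j then (1 : ℕ) else 0)
    have h2 := Fin.sum_univ_succAbove (fun l => if l = j then (1 : ℕ) else 0) k
    have h3 : ∑ l : Fin (m + 1), (if l = j then (1 : ℕ) else 0) = 1 := by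
      rw [Finset.sum_ite_eq' univ j fun _ => 1]; simp
    rw [h3] at h2
    omega
  have hcoleq : ∀ j, ∑ i, d i j = m := by
    intro j
    rw [hd]
    simp only
    rw [Finset.sum_add_distrib, Finset.sum_comm]
    have h1 : ∀ i' : Fin m, (∑ i, if (f i').succAbove (σ (f i') i) = j then 1 else 0)
        = 1 - (if f i' = j then 1 else 0) := by
      intro i'
      have := hcolcount (f i') j
      omega
    rw [Finset.sum_congr rfl fun i' _ => h1 i']
    have hle : ∀ i' : Fin m, (if f i' = j then 1 else 0) ≤ 1 := by
      intro i'; split <;> omega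
    rw [Finset.sum_tsub_distrib univ (fun i' _ => hle i')]
    have hA : (∑ i' : Fin m, if f i' = j then 1 else 0) ≤ ∑ i' : Fin m, 1 :=
      Finset.sum_le_sum fun i' _ => hle i'
    simp only [Finset.sum_const, card_univ, Fintype.card_fin, smul_eq_mul, mul_one] at *
    omega
  have hcol : ∀ j, ∑ i, d i j ≤ m + 1 := fun j => by rw [hcoleq j]; omega
  have hsupp : ∀ i j, 0 < d i j → C i j ≠ ⊥ := by
    intro i j hpos
    rw [hd] at hpos
    simp only at hpos
    by_cases h1 : f i = j
    · rw [← h1]; exact hbot i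
    · have h2 : 0 < ∑ i', (if (f i').succAbove (σ (f i') i) = j then 1 else 0) := by
        rw [if_neg h1, Nat.zero_add] at hpos
        exact hpos
      have h3 : ∃ i', (if (f i').succAbove (σ (f i') i) = j then 1 else 0) ≠ 0 := by
        by_contra hc
        push_neg at hc
        rw [Finset.sum_eq_zero fun i' _ => hc i'] at h2
        omega
      obtain ⟨i', hi'⟩ := h3
      have h4 : (f i').succAbove (σ (f i') i) = j := by
        by_contra hc; simp [hc] at hi'
      rw [← h4, hw (f i') i]
      exact WithBot.coe_ne_bot
  obtain ⟨g, ms, hginj, hgne, hgdec, hmscol⟩ := decomp (m + 1) d hrow hcol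
  set c' : Fin m → Fin (m + 1) → ℝ := fun i j => WithBot.unbotD 0 (C i j) with hc'
  have hc'eq : ∀ i j, C i j ≠ ⊥ → C i j = ((c' i j : ℝ) : WithBot ℝ) := by
    intro i j h
    obtain ⟨x, hx⟩ := WithBot.ne_bot_iff_exists.mp h
    rw [← hx]; simp [hc']; rw [← hx]; simp
  have hW1 : ∀ i, ∑ j, (d i j : ℝ) * c' i j
      = c' i (f i) + ∑ i', c' i ((f i').succAbove (σ (f i') i)) := by
    intro i
    have hcast : ∀ j, (d i j : ℝ) = (if f i = j then (1 : ℝ) else 0) +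
        ∑ i', (if (f i').succAbove (σ (f i') i) = j then (1 : ℝ) else 0) := by
      intro j; rw [hd]; push_cast; rfl
    rw [Finset.sum_congr rfl fun j _ => by rw [hcast j, add_mul, Finset.sum_mul]]
    rw [Finset.sum_add_distrib]
    congr 1
    · rw [Finset.sum_congr rfl fun j _ => by rw [ite_mul, one_mul, zero_mul]]
      rw [Finset.sum_ite_eq univ (f i) (fun j => c' i j)]
      simp
    · rw [Finset.sum_comm]
      refine Finset.sum_congr rfl fun i' _ => ?_
      rw [Finset.sum_congr rfl fun j _ => by rw [ite_mul, one_mul, zero_mul]]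
      rw [Finset.sum_ite_eq univ _ (fun j => c' i j)]
      simp
  have hW2 : ∀ i, ∑ j, (d i j : ℝ) * c' i j = ∑ t, c' i (g t i) := by
    intro i
    have hcast : ∀ j, (d i j : ℝ) = ∑ t, (if g t i = j then (1 : ℝ) else 0) := by
      intro j
      rw [hgdec i j]; push_cast; rfl
    rw [Finset.sum_congr rfl fun j _ => by rw [hcast j, Finset.sum_mul]]
    rw [Finset.sum_comm]
    refine Finset.sum_congr rfl fun t _ => ?_
    rw [Finset.sum_congr rfl fun j _ => by rw [ite_mul, one_mul, zero_mul]]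
    rw [Finset.sum_ite_eq univ _ (fun j => c' i j)]
    simp
  have hgsup : ∀ t i, C i (g t i) ≠ ⊥ := by
    intro t i
    refine hsupp i (g t i) ?_
    rw [hgdec i (g t i)]
    have hs : (if g t i = g t i then (1 : ℕ) else 0) ≤ ∑ t', (if g t' i = g t i then 1 else 0) :=
      Finset.single_le_sum (f := fun t' => if g t' i = g t i then (1 : ℕ) else 0)
        (fun t' _ => Nat.zero_le _) (mem_univ t)
    simp only [if_pos rfl] at hs
    exact Nat.lt_of_lt_of_le Nat.zero_lt_one hs
  have hperT : ∀ t, ∑ i, c' i (g t i) ≤ p (ms t) := by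
    intro t
    obtain ⟨π, hπ⟩ := perm_of_avoid (hginj t) (fun i => hgne t i)
    have h1 : ((∑ i, c' i (g t i) : ℝ) : WithBot ℝ)
        = ∑ i, C i ((ms t).succAbove (π i)) := by
      rw [wb_sum_coe]
      refine Finset.sum_congr rfl fun i _ => ?_
      rw [hπ i, hc'eq i (g t i) (hgsup t i)]
    have h2' : (∑ i, C i ((ms t).succAbove (π i))) ≤ Finset.univ.sup
        (fun σ' : Equiv.Perm (Fin m) => ∑ i, C i ((ms t).succAbove (σ' i))) :=
      Finset.le_sup (f := fun σ' : Equiv.Perm (Fin m) => ∑ i, C i ((ms t).succAbove (σ' i)))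
        (mem_univ π)
    have h2 : (∑ i, C i ((ms t).succAbove (π i))) ≤ cramerPer C (ms t) := h2' 
    rw [hp (ms t)] at h2
    rw [← h1] at h2
    exact_mod_cast h2
  have hmsone : ∀ j, (∑ t, if ms t = j then 1 else 0) = 1 := by
    intro j
    have := hmscol j
    rw [hcoleq j] at this
    omega
  have hmssum : ∑ t, p (ms t) = ∑ k, p k := by
    have h1 : ∀ t, p (ms t) = ∑ j, (if ms t = j then p j else 0) := by
      intro t
      rw [Finset.sum_ite_eq univ (ms t) p]; simp
    rw [Finset.sum_congr rfl fun t _ => h1 t, Finset.sum_comm]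
    refine Finset.sum_congr rfl fun j _ => ?_
    have : ∀ t, (if ms t = j then p j else 0) = p j * (if ms t = j then (1 : ℝ) else 0) := by
      intro t; split <;> simp
    rw [Finset.sum_congr rfl fun t _ => this t, ← Finset.mul_sum]
    have : (∑ t, if ms t = j then (1 : ℝ) else 0) = 1 := by
      have := hmsone j
      have hcast : (∑ t, if ms t = j then (1 : ℝ) else 0)
          = ((∑ t, if ms t = j then (1 : ℕ) else 0 : ℕ) : ℝ) := by push_cast; rfl
      rw [hcast, this]; norm_num
    rw [this, mul_one]
  -- final chain
  have hLHS : ∑ i, (C i (f i) + ((p (f i) : ℝ) : WithBot ℝ))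
      = ((∑ i, (c' i (f i) + p (f i)) : ℝ) : WithBot ℝ) := by
    rw [wb_sum_coe]
    refine Finset.sum_congr rfl fun i _ => ?_
    rw [hc'eq i (f i) (hbot i), ← WithBot.coe_add]
  rw [hLHS, WithBot.coe_le_coe]
  calc ∑ i, (c' i (f i) + p (f i))
      = ∑ i, c' i (f i) + ∑ i, p (f i) := Finset.sum_add_distrib
    _ = ∑ i, (∑ j, (d i j : ℝ) * c' i j) - ∑ i', p (f i') + ∑ i, p (f i) := by
        rw [Finset.sum_congr rfl fun i _ => hW1 i, Finset.sum_add_distrib, Finset.sum_comm]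
        have : ∀ i', ∑ i, c' i ((f i').succAbove (σ (f i') i)) = p (f i') := by
          intro i'
          rw [← hwsum (f i')]
          refine Finset.sum_congr rfl fun i _ => ?_
          have := hw (f i') i
          simp [hc', this]
        rw [Finset.sum_congr rfl fun i' _ => this i']
        ring
    _ = ∑ i, (∑ j, (d i j : ℝ) * c' i j) := by ring
    _ = ∑ t, ∑ i, c' i (g t i) := by
        rw [Finset.sum_congr rfl fun i _ => hW2 i, Finset.sum_comm]
    _ ≤ ∑ t, p (ms t) := Finset.sum_le_sum fun t _ => hperT t
    _ = ∑ k, p k := hmssum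

lemma wb_le_sub {a : WithBot ℝ} {x y : ℝ} (h : a + (x : WithBot ℝ) ≤ (y : WithBot ℝ)) :
    a ≤ ((y - x : ℝ) : WithBot ℝ) := by
  induction a using WithBot.recBotCoe with
  | bot => exact bot_le
  | coe t =>
    rw [← WithBot.coe_add, WithBot.coe_le_coe] at h
    rw [WithBot.coe_le_coe]
    linarith

lemma exists_good_dual {m : ℕ} (C : Matrix (Fin m) (Fin (m + 1)) (WithBot ℝ))
    (p : Fin (m + 1) → ℝ) (hp : ∀ k, cramerPer C k = ((p k : ℝ) : WithBot ℝ)) :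
    ∃ u v, dualFeasible C u v ∧ ∀ k, ∑ i, u i + (∑ j, v j - v k) = p k := by
  classical
  rcases Nat.eq_zero_or_pos m with hm | hm
  · subst hm
    refine ⟨fun _ => 0, fun _ => 0, fun i j => i.elim0, ?_⟩
    intro k
    have h0 : cramerPer C k = (0 : WithBot ℝ) := by
      have h1 : cramerPer C k = Finset.univ.sup
          (fun _ : Equiv.Perm (Fin 0) => (0 : WithBot ℝ)) := by
        apply Finset.sup_congr rfl
        intro σ _
        simp
      rw [h1, Finset.sup_const Finset.univ_nonempty]
    have h2 : ((p k : ℝ) : WithBot ℝ) = ((0 : ℝ) : WithBot ℝ) := by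
      rw [← hp k, h0]; rfl
    have h3 : p k = 0 := by exact_mod_cast h2
    simp [h3]
  · obtain ⟨σ0, w0, hw0, hw0s⟩ := cramer_exists_max C 0
      (by rw [hp 0]; exact WithBot.coe_ne_bot)
    set Mb : Fin m → WithBot ℝ :=
      fun i => Finset.univ.sup (fun j => C i j + ((p j : ℝ) : WithBot ℝ)) with hMb
    have hMbne : ∀ i, Mb i ≠ ⊥ := by
      intro i hMB
      have h1 : C i ((0 : Fin (m + 1)).succAbove (σ0 i)) + ((p _ : ℝ) : WithBot ℝ) ≤ Mb i :=
        Finset.le_sup (f := fun j => C i j + ((p j : ℝ) : WithBot ℝ)) (mem_univ _)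
      rw [hw0 i, ← WithBot.coe_add, hMB, le_bot_iff] at h1
      exact WithBot.coe_ne_bot h1
    have hMex : ∀ i, ∃ x : ℝ, Mb i = ((x : ℝ) : WithBot ℝ) := by
      intro i
      obtain ⟨x, hx⟩ := WithBot.ne_bot_iff_exists.mp (hMbne i)
      exact ⟨x, hx.symm⟩
    choose M hM using hMex
    have hfeas0 : ∀ i j, C i j + ((p j : ℝ) : WithBot ℝ) ≤ ((M i : ℝ) : WithBot ℝ) := by
      intro i j
      rw [← hM i]
      exact Finset.le_sup (f := fun j => C i j + ((p j : ℝ) : WithBot ℝ)) (mem_univ j)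
    -- key: ∑ M ≤ ∑ p
    have hargmax : ∀ i, ∃ j, Mb i = C i j + ((p j : ℝ) : WithBot ℝ) := by
      intro i
      obtain ⟨j, -, hj⟩ := Finset.exists_mem_eq_sup univ univ_nonempty
        (fun j => C i j + ((p j : ℝ) : WithBot ℝ))
      exact ⟨j, hj⟩
    choose f hf using hargmax
    have hMsum : ∑ i, M i ≤ ∑ k, p k := by
      have h1 : ((∑ i, M i : ℝ) : WithBot ℝ) ≤ ((∑ k, p k : ℝ) : WithBot ℝ) := by
        rw [wb_sum_coe]
        calc ∑ i, ((M i : ℝ) : WithBot ℝ) = ∑ i, (C i (f i) + ((p (f i) : ℝ) : WithBot ℝ)) := by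
              refine Finset.sum_congr rfl fun i _ => ?_
              rw [← hM i, hf i]
          _ ≤ _ := key_ineq C p hp f
      exact_mod_cast h1
    set δ : ℝ := (∑ k, p k - ∑ i, M i) / m with hδdef
    have hδ : 0 ≤ δ := by
      apply div_nonneg (by linarith)
      exact_mod_cast Nat.zero_le m
    have hmne : (m : ℝ) ≠ 0 := by
      have : (0 : ℝ) < m := by exact_mod_cast hm
      linarith
    have hmδ : (m : ℝ) * δ = ∑ k, p k - ∑ i, M i := by
      rw [hδdef, mul_div_cancel₀ _ hmne]
    refine ⟨fun i => M i + δ, fun j => -p j, ?_, ?_⟩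
    · intro i j
      have h1 : C i j ≤ ((M i - p j : ℝ) : WithBot ℝ) := wb_le_sub (hfeas0 i j)
      refine le_trans h1 ?_
      rw [WithBot.coe_le_coe]
      beta_reduce
      linarith
    · intro k
      rw [Finset.sum_add_distrib, Finset.sum_const, card_univ, Fintype.card_fin,
        nsmul_eq_mul]
      have h2 : ∑ j : Fin (m + 1), -p j = -∑ j, p j := by
        rw [Finset.sum_neg_distrib]
      rw [h2]
      have := hmδ
      beta_reduce
      linarith

lemma finite_to_primal {m : ℕ} (C : Matrix (Fin m) (Fin (m + 1)) (WithBot ℝ))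
    (h : ∀ k, cramerPer C k ≠ ⊥) : ∃ y, primalFeasible C y := by
  classical
  have hmax : ∀ k : Fin (m + 1), ∃ σ : Equiv.Perm (Fin m), ∀ i, C i (k.succAbove (σ i)) ≠ ⊥ := by
    intro k
    obtain ⟨σ, w, hw, -⟩ := cramer_exists_max C k (h k)
    exact ⟨σ, fun i => by rw [hw i]; exact WithBot.coe_ne_bot⟩
  choose σ hσ using hmax
  refine ⟨fun i j => ∑ k : Fin (m + 1), if k.succAbove (σ k i) = j then (1 : ℝ) else 0,
    ?_, ?_, ?_, ?_⟩
  · intro i j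
    exact Finset.sum_nonneg fun k _ => by positivity
  · intro i
    rw [Finset.sum_comm]
    have h1 : ∀ k : Fin (m + 1), ∑ j, (if k.succAbove (σ k i) = j then (1 : ℝ) else 0) = 1 := by
      intro k
      rw [Finset.sum_ite_eq univ _ fun _ => (1 : ℝ)]; simp
    rw [Finset.sum_congr rfl fun k _ => h1 k]
    simp
  · intro j
    rw [Finset.sum_comm]
    have h1 : ∀ k : Fin (m + 1), (∑ i, if k.succAbove (σ k i) = j then (1 : ℝ) else 0)
        = 1 - (if k = j then (1 : ℝ) else 0) := by
      intro k
      have h2 : (∑ i, if k.succAbove (σ k i) = j then (1 : ℝ) else 0)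
          = ∑ i, (if k.succAbove i = j then (1 : ℝ) else 0) :=
        Equiv.sum_comp (σ k) (fun i => if k.succAbove i = j then (1 : ℝ) else 0)
      have h3 := Fin.sum_univ_succAbove (fun l => if l = j then (1 : ℝ) else 0) k
      have h4 : ∑ l : Fin (m + 1), (if l = j then (1 : ℝ) else 0) = 1 := by
        rw [Finset.sum_ite_eq' univ j fun _ => (1 : ℝ)]; simp
      rw [h4] at h3
      rw [h2]
      linarith
    rw [Finset.sum_congr rfl fun k _ => h1 k, Finset.sum_sub_distrib]
    have h5 : ∑ k : Fin (m + 1), (if k = j then (1 : ℝ) else 0) = 1 := by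
      rw [Finset.sum_ite_eq' univ j fun _ => (1 : ℝ)]; simp
    rw [h5]
    simp
  · intro i j hbot
    refine Finset.sum_eq_zero fun k _ => ?_
    have : ¬ (k.succAbove (σ k i) = j) := by
      intro he
      exact hσ k i (he ▸ hbot)
    simp [this]

lemma primal_to_finite {m : ℕ} (C : Matrix (Fin m) (Fin (m + 1)) (WithBot ℝ))
    (y : Matrix (Fin m) (Fin (m + 1)) ℝ) (hy : primalFeasible C y) (k : Fin (m + 1)) :
    cramerPer C k ≠ ⊥ := by
  classical
  obtain ⟨hpos, hrow, hcol, hzero⟩ := hy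
  set t : Fin m → Finset (Fin (m + 1)) :=
    fun i => univ.filter (fun j => j ≠ k ∧ 0 < y i j) with ht
  have hall : ∀ S : Finset (Fin m), S.card ≤ (S.biUnion t).card := by
    intro S
    rcases Finset.eq_empty_or_nonempty S with rfl | hSne
    · simp
    set N : Finset (Fin (m + 1)) := S.biUnion t with hN
    have hA1 : ∑ i ∈ S, ∑ j ∈ univ.erase k, y i j
        = ((m : ℝ) + 1) * S.card - ∑ i ∈ S, y i k := by
      rw [Finset.sum_congr rfl fun i (_ : i ∈ S) =>
        Finset.sum_erase_eq_sub (f := fun j => y i j) (mem_univ k)]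
      rw [Finset.sum_sub_distrib]
      rw [Finset.sum_congr rfl fun i (_ : i ∈ S) => hrow i]
      rw [Finset.sum_const, nsmul_eq_mul]
      ring
    have hA2 : ∑ i ∈ S, y i k ≤ (m : ℝ) := by
      rw [← hcol k]
      exact Finset.sum_le_sum_of_subset_of_nonneg (Finset.subset_univ S)
        (fun i _ _ => hpos i k)
    have hA3 : ∑ i ∈ S, ∑ j ∈ univ.erase k, y i j ≤ ∑ i ∈ S, ∑ j ∈ N, y i j := by
      refine Finset.sum_le_sum fun i hi => ?_
      have hsub : t i ⊆ N := Finset.subset_biUnion_of_mem t hi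
      have he1 : ∑ j ∈ univ.erase k, y i j = ∑ j ∈ t i, y i j := by
        symm
        refine Finset.sum_subset ?_ ?_
        · intro j hj
          simp only [ht, Finset.mem_filter] at hj
          exact Finset.mem_erase.mpr ⟨hj.2.1, mem_univ j⟩
        · intro j hj1 hj2
          simp only [ht, Finset.mem_filter, Finset.mem_erase] at hj1 hj2
          push_neg at hj2
          rcases lt_or_eq_of_le (hpos i j) with hlt | heq
          · exact absurd hlt (by simpa using hj2 (mem_univ j) hj1.1)
          · exact heq.symm
      rw [he1]
      exact Finset.sum_le_sum_of_subset_of_nonneg hsub (fun j _ _ => hpos i j)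
    have hA4 : ∑ i ∈ S, ∑ j ∈ N, y i j ≤ (m : ℝ) * N.card := by
      rw [Finset.sum_comm (f := fun i j => y i j)]
      have : ∀ j ∈ N, ∑ i ∈ S, y i j ≤ (m : ℝ) := by
        intro j _
        rw [← hcol j]
        exact Finset.sum_le_sum_of_subset_of_nonneg (Finset.subset_univ S)
          (fun i _ _ => hpos i j)
      calc ∑ j ∈ N, ∑ i ∈ S, y i j ≤ ∑ j ∈ N, (m : ℝ) := Finset.sum_le_sum this
        _ = (m : ℝ) * N.card := by rw [Finset.sum_const, nsmul_eq_mul]; ring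
    by_contra hcon
    push_neg at hcon
    have hc1 : (N.card : ℝ) + 1 ≤ S.card := by exact_mod_cast hcon
    have hc2 : (1 : ℝ) ≤ S.card := by
      have := Finset.card_pos.mpr hSne
      exact_mod_cast this
    nlinarith [hA1, hA2, hA3, hA4]
  obtain ⟨F, hFinj, hFmem⟩ := (Finset.all_card_le_biUnion_card_iff_exists_injective t).mp hall
  have hFne : ∀ i, F i ≠ k := by
    intro i
    have := hFmem i
    simp only [ht, Finset.mem_filter] at this
    exact this.2.1
  have hFpos : ∀ i, 0 < y i (F i) := by
    intro i
    have := hFmem i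
    simp only [ht, Finset.mem_filter] at this
    exact this.2.2
  obtain ⟨π, hπ⟩ := perm_of_avoid hFinj hFne
  have hCne : ∀ i ∈ (univ : Finset (Fin m)), C i (k.succAbove (π i)) ≠ ⊥ := by
    intro i _ hbot
    rw [hπ i] at hbot
    have := hzero i (F i) hbot
    exact absurd this (ne_of_gt (hFpos i))
  have hle : (∑ i, C i (k.succAbove (π i))) ≤ cramerPer C k :=
    Finset.le_sup (f := fun σ : Equiv.Perm (Fin m) => ∑ i, C i (k.succAbove (σ i)))
      (mem_univ π)
  intro hbot
  rw [hbot, le_bot_iff] at hle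
  exact wb_sum_ne_bot hCne hle


/-- The transportation approach to tropical Cramer permanents: the primal transportation
problem is feasible iff all the tropical Cramer permanents of `C` are finite; in that
case the dual problem has an optimal solution, optimal dual solutions are unique up to
an additive constant `t` (added to `u` and subtracted from `v`), and every optimal dual
solution `(u, v)` recovers the Cramer permanents:
`per C_{|k)} = Σ_i u_i + Σ_{j ≠ k} v_j`. -/
theorem stmt18 (m : ℕ) (C : Matrix (Fin m) (Fin (m + 1)) (WithBot ℝ)) :
    ((∃ y : Matrix (Fin m) (Fin (m + 1)) ℝ, primalFeasible C y) ↔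
      ∀ k, cramerPer C k ≠ ⊥) ∧
    ((∀ k, cramerPer C k ≠ ⊥) →
      (∃ u v, dualOptimal C u v) ∧
      (∀ u v u' v', dualOptimal C u v → dualOptimal C u' v' →
        ∃ t : ℝ, (∀ i, u' i = u i + t) ∧ ∀ j, v' j = v j - t) ∧
      ∀ u v, dualOptimal C u v → ∀ k : Fin (m + 1),
        cramerPer C k =
          ((∑ i, u i + ∑ j ∈ Finset.univ.erase k, v j : ℝ) : WithBot ℝ)) := by
  constructor
  · constructor
    · rintro ⟨y, hy⟩ k
      exact primal_to_finite C y hy k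
    · exact finite_to_primal C
  · intro h
    have hex : ∀ k, ∃ x : ℝ, cramerPer C k = ((x : ℝ) : WithBot ℝ) := by
      intro k
      obtain ⟨x, hx⟩ := WithBot.ne_bot_iff_exists.mp (h k)
      exact ⟨x, hx.symm⟩
    choose p hp using hex
    obtain ⟨u0, v0, hfeas0, hid0⟩ := exists_good_dual C p hp
    have hobj0 : dualObj u0 v0 = ∑ k, p k := by
      rw [dualObj_eq_sum]
      exact Finset.sum_congr rfl fun k _ => hid0 k
    have hweaksum : ∀ u' v', dualFeasible C u' v' → ∑ k, p k ≤ dualObj u' v' := by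
      intro u' v' hf
      rw [dualObj_eq_sum]
      refine Finset.sum_le_sum fun k _ => ?_
      have := weak_dual hf k
      rw [hp k, WithBot.coe_le_coe] at this
      exact this
    have hopt0 : dualOptimal C u0 v0 := by
      refine ⟨hfeas0, fun u' v' hf => ?_⟩
      rw [hobj0]; exact hweaksum u' v' hf
    have ident : ∀ u v, dualOptimal C u v → ∀ k, ∑ i, u i + (∑ j, v j - v k) = p k := by
      intro u v hopt
      have h1 : ∀ k ∈ (univ : Finset (Fin (m + 1))),
          p k ≤ ∑ i, u i + (∑ j, v j - v k) := by
        intro k _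
        have := weak_dual hopt.1 k
        rw [hp k, WithBot.coe_le_coe] at this
        exact this
      have h2 : ∑ k, p k = ∑ k : Fin (m + 1), (∑ i, u i + (∑ j, v j - v k)) := by
        refine le_antisymm (Finset.sum_le_sum h1) ?_
        rw [← dualObj_eq_sum, ← hobj0]
        exact hopt.2 u0 v0 hfeas0
      intro k
      exact ((Finset.sum_eq_sum_iff_of_le h1).mp h2 k (mem_univ k)).symm
    refine ⟨⟨u0, v0, hopt0⟩, ?_, ?_⟩
    · intro u v u' v' hopt hopt'
      have h1 := ident u v hopt
      have h2 := ident u' v' hopt'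
      set t : ℝ := (∑ i, u i + ∑ j, v j) - (∑ i, u' i + ∑ j, v' j) with htdef
      have hv : ∀ j, v' j = v j - t := by
        intro j
        have e1 := h1 j
        have e2 := h2 j
        rw [htdef]; linarith
      refine ⟨t, ?_, hv⟩
      obtain ⟨σ0, w0, hw0, hw0s⟩ := cramer_exists_max C 0 (h 0)
      have hp0 : ∑ i, w0 i = p 0 := by
        have := hw0s.trans (hp 0); exact_mod_cast this
      have htight : ∀ u v, dualOptimal C u v →
          ∀ i, u i = w0 i - v ((0 : Fin (m + 1)).succAbove (σ0 i)) := by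
        intro u v hopt i
        have hle : ∀ i ∈ (univ : Finset (Fin m)),
            w0 i ≤ u i + v ((0 : Fin (m + 1)).succAbove (σ0 i)) := by
          intro i _
          have := hopt.1 i ((0 : Fin (m + 1)).succAbove (σ0 i))
          rw [hw0 i, WithBot.coe_le_coe] at this
          exact this
        have hseq : ∑ i, w0 i = ∑ i, (u i + v ((0 : Fin (m + 1)).succAbove (σ0 i))) := by
          rw [hp0, Finset.sum_add_distrib, sum_succAbove_perm v 0 σ0]
          exact (ident u v hopt 0).symm
        have := (Finset.sum_eq_sum_iff_of_le hle).mp hseq i (mem_univ i)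
        linarith
      intro i
      have e1 := htight u v hopt i
      have e2 := htight u' v' hopt' i
      rw [e1, e2, hv _]
      ring
    · intro u v hopt k
      rw [hp k, Finset.sum_erase_eq_sub (mem_univ k)]
      exact WithBot.coe_inj.mpr (ident u v hopt k).symm
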